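/- Let d = 3, Ω = ℝ³, φ(v) = exp(−v₁² − 2v₂² − 3v₃²), and f(v) = exp(−v₁²/2 − v₂²/4 − v₃²/8) for v ∈ ℝ³. Then the Landau operator satisfies Q(f,f)(v) = ∇_v · Q^c(f,f)(v) = −(1/41006250) · q₁(v) · (q₃₁(v) + q₃₂(v)) for every v ∈ ℝ³, where q₁(v) = √3 · π^{3/2} · exp(−(5/6)v₁² − (17/36)v₂² − (49/200)v₃²), q₃₁(v) = 17500v₁²v₂² + 7047v₁²v₃² + 135v₂²v₃², and q₃₂(v) = −1005300v₁² + 111000v₂² + 46899v₃² + 369900. -/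

import Mathlib

open MeasureTheory

/-- The Landau integral operator
Q^c(f,f)(v) = ∫_Ω φ(v−w) P(v−w) (f(w) ∇f(v) − f(v) ∇f(w)) dw,
where P(z) = |z|² I_d − z⊗z acts on a vector g as P(z) g = |z|² g − ⟨z, g⟩ z. -/
noncomputable def landauQc {d : ℕ} (Ω : Set (EuclideanSpace ℝ (Fin d)))
    (φ : EuclideanSpace ℝ (Fin d) → ℝ) (f : EuclideanSpace ℝ (Fin d) → ℝ)
    (v : EuclideanSpace ℝ (Fin d)) : EuclideanSpace ℝ (Fin d) :=
  ∫ w in Ω, φ (v - w) •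
    ((‖v - w‖ ^ 2) • (f w • gradient f v - f v • gradient f w)
      - (inner ℝ (v - w) (f w • gradient f v - f v • gradient f w) : ℝ) • (v - w))

/-- Divergence ∇·F of a vector field on ℝ^d. -/
noncomputable def landauDiv {d : ℕ} (F : EuclideanSpace ℝ (Fin d) → EuclideanSpace ℝ (Fin d))
    (v : EuclideanSpace ℝ (Fin d)) : ℝ :=
  ∑ i, fderiv ℝ (fun u => F u i) v (EuclideanSpace.single i 1)

open Real

lemma integral_odd {f : ℝ → ℝ} (h : ∀ x, f (-x) = - f x) : ∫ x, f x = 0 := by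
  have h1 : ∫ x : ℝ, f (-x) = ∫ x, f x := integral_neg_eq_self f _
  simp_rw [h, integral_neg] at h1
  linarith

lemma integrable_pow_gauss {c : ℝ} (hc : 0 < c) (k : ℕ) :
    Integrable fun x : ℝ => x ^ k * Real.exp (-c * x ^ 2) := by
  have hk : (-1 : ℝ) < (k : ℝ) := lt_of_lt_of_le (by norm_num) (Nat.cast_nonneg k)
  simpa [Real.rpow_natCast] using integrable_rpow_mul_exp_neg_mul_sq hc hk

lemma integral_sq_gauss {c : ℝ} (hc : 0 < c) :
    ∫ x : ℝ, x ^ 2 * Real.exp (-c * x ^ 2) = (1 / (2 * c)) * Real.sqrt (π / c) := by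
  have h1 : ∫ x : ℝ, x ^ 2 * Real.exp (-c * x ^ 2)
      = 2 * ∫ x in Set.Ioi (0:ℝ), x ^ 2 * Real.exp (-c * x ^ 2) := by
    rw [← integral_comp_abs (f := fun x => x ^ 2 * Real.exp (-c * x ^ 2))]
    congr 1; ext x; rw [sq_abs]
  have h2 : ∫ x in Set.Ioi (0:ℝ), x ^ 2 * Real.exp (-c * x ^ 2)
      = c ^ (-(((2:ℝ) + 1)) / 2) * (1 / 2) * Real.Gamma (((2:ℝ) + 1) / 2) := by
    rw [← integral_rpow_mul_exp_neg_mul_rpow (by norm_num) (by norm_num) hc]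
    refine setIntegral_congr_fun measurableSet_Ioi (fun x hx => ?_)
    simp [Real.rpow_two]
  have hG : Real.Gamma (((2:ℝ) + 1) / 2) = Real.sqrt π / 2 := by
    have : ((2:ℝ) + 1) / 2 = 1/2 + 1 := by norm_num
    rw [this, Real.Gamma_add_one (by norm_num), Real.Gamma_one_half_eq]
    ring
  have hsc : Real.sqrt c ≠ 0 := by positivity
  have hrw : c ^ (-(((2:ℝ) + 1)) / 2) = 1 / (c * Real.sqrt c) := by
    have h3 : (-(((2:ℝ) + 1)) / 2) = -(3/2 : ℝ) := by norm_num
    rw [h3, Real.rpow_neg hc.le]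
    have : c ^ ((3:ℝ)/2) = c * Real.sqrt c := by
      rw [show ((3:ℝ)/2) = 1 + (1/2 : ℝ) by norm_num, Real.rpow_add hc,
        Real.rpow_one, ← Real.sqrt_eq_rpow]
    rw [this, one_div]
  rw [h1, h2, hG, hrw, Real.sqrt_div pi_nonneg c]
  field_simp

lemma gauss_complete_sq {c : ℝ} (hc : 0 < c) (β γ x : ℝ) :
    -c * x ^ 2 + β * x + γ = -c * (x - β/(2*c)) ^ 2 + (β^2/(4*c) + γ) := by
  field_simp; ring

lemma shift_eq {c : ℝ} (hc : 0 < c) (β γ : ℝ) (k : ℕ) :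
    (fun x : ℝ => x ^ k * Real.exp (-c * x ^ 2 + β * x + γ))
      = fun x => ((fun y => (y + β/(2*c)) ^ k * Real.exp (-c * y ^ 2)
          * Real.exp (β^2/(4*c) + γ)) (x - β/(2*c))) := by
  funext x
  simp only
  rw [sub_add_cancel, mul_assoc, ← Real.exp_add, ← gauss_complete_sq hc]

lemma integrable_shift_pow_gauss {c : ℝ} (hc : 0 < c) (μ : ℝ) (k : ℕ) :
    Integrable fun y : ℝ => (y + μ) ^ k * Real.exp (-c * y ^ 2) := by
  have h : (fun y : ℝ => (y + μ) ^ k * Real.exp (-c * y ^ 2))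
      = fun y => ∑ j ∈ Finset.range (k + 1),
          (μ ^ (k - j) * (k.choose j : ℝ)) * (y ^ j * Real.exp (-c * y ^ 2)) := by
    funext y
    rw [add_pow, Finset.sum_mul]
    exact Finset.sum_congr rfl fun j hj => by ring
  rw [h]
  exact integrable_finset_sum _ fun j _ => ((integrable_pow_gauss hc j).const_mul _)

lemma integrable_pow_gauss_lin {c : ℝ} (hc : 0 < c) (β γ : ℝ) (k : ℕ) :
    Integrable fun x : ℝ => x ^ k * Real.exp (-c * x ^ 2 + β * x + γ) := by
  rw [shift_eq hc β γ k]
  exact ((integrable_shift_pow_gauss hc _ k).mul_const _).comp_sub_right _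

lemma integral_pow_gauss_lin {c : ℝ} (hc : 0 < c) (β γ : ℝ) (k : ℕ) :
    ∫ x : ℝ, x ^ k * Real.exp (-c * x ^ 2 + β * x + γ)
      = (∫ y : ℝ, (y + β/(2*c)) ^ k * Real.exp (-c * y ^ 2))
          * Real.exp (β^2/(4*c) + γ) := by
  rw [shift_eq hc β γ k,
    integral_sub_right_eq_self (fun y => (y + β/(2*c)) ^ k * Real.exp (-c * y ^ 2)
      * Real.exp (β^2/(4*c) + γ)) (β/(2*c)), integral_mul_const]

lemma integral_gauss_lin0 {c : ℝ} (hc : 0 < c) (β γ : ℝ) :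
    ∫ x : ℝ, Real.exp (-c * x ^ 2 + β * x + γ)
      = Real.sqrt (π/c) * Real.exp (β^2/(4*c) + γ) := by
  have h := integral_pow_gauss_lin hc β γ 0
  simp only [pow_zero, one_mul] at h
  rw [h, integral_gaussian]

lemma integral_X_gauss {c : ℝ} (hc : 0 < c) :
    ∫ y : ℝ, y * Real.exp (-c * y ^ 2) = 0 :=
  integral_odd (fun y => by rw [neg_sq]; ring)

lemma integral_gauss_lin1 {c : ℝ} (hc : 0 < c) (β γ : ℝ) :
    ∫ x : ℝ, x * Real.exp (-c * x ^ 2 + β * x + γ)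
      = (β/(2*c)) * Real.sqrt (π/c) * Real.exp (β^2/(4*c) + γ) := by
  have h := integral_pow_gauss_lin hc β γ 1
  simp only [pow_one] at h
  rw [h]
  have hsplit : (fun y : ℝ => (y + β/(2*c)) * Real.exp (-c * y ^ 2))
      = fun y => y * Real.exp (-c * y ^ 2) + (β/(2*c)) * Real.exp (-c * y ^ 2) := by
    funext y; ring
  rw [hsplit, integral_add (by simpa using integrable_pow_gauss hc 1)
      ((integrable_exp_neg_mul_sq hc).const_mul _),
    integral_const_mul, integral_gaussian, integral_X_gauss hc]
  ring

lemma integral_gauss_lin2 {c : ℝ} (hc : 0 < c) (β γ : ℝ) :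
    ∫ x : ℝ, x ^ 2 * Real.exp (-c * x ^ 2 + β * x + γ)
      = ((β/(2*c))^2 + 1/(2*c)) * Real.sqrt (π/c) * Real.exp (β^2/(4*c) + γ) := by
  rw [integral_pow_gauss_lin hc β γ 2]
  have hsplit : (fun y : ℝ => (y + β/(2*c)) ^ 2 * Real.exp (-c * y ^ 2))
      = fun y => (y ^ 2 * Real.exp (-c * y ^ 2) + (2 * (β/(2*c))) * (y * Real.exp (-c * y ^ 2)))
          + (β/(2*c))^2 * Real.exp (-c * y ^ 2) := by
    funext y; ring
  have h1 : Integrable fun y : ℝ => y * Real.exp (-c*y^2) := by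
    simpa using integrable_pow_gauss hc 1
  have hA : Integrable (fun y : ℝ => y ^ 2 * Real.exp (-c*y^2)
      + 2 * (β/(2*c)) * (y * Real.exp (-c*y^2))) := by
    exact (integrable_pow_gauss hc 2).add (h1.const_mul (2 * (β/(2*c))))
  have hB : Integrable (fun y : ℝ => (β/(2*c))^2 * Real.exp (-c*y^2)) := by
    exact (integrable_exp_neg_mul_sq hc).const_mul ((β/(2*c))^2)
  rw [hsplit, integral_add hA hB,
    integral_add (integrable_pow_gauss hc 2) (h1.const_mul (2 * (β/(2*c)))),
    integral_const_mul, integral_const_mul, integral_gaussian, integral_X_gauss hc,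
    integral_sq_gauss hc]
  ring

notation "E3" => EuclideanSpace ℝ (Fin 3)

noncomputable def pj (i : Fin 3) : E3 →L[ℝ] ℝ := EuclideanSpace.proj i

lemma pj_apply (i : Fin 3) (x : E3) : pj i x = x i := by simp [pj]

lemma hasFDerivAt_quad (a b c : ℝ) (v : E3) :
    HasFDerivAt (fun u : E3 => a * (u 0)^2 + b * (u 1)^2 + c * (u 2)^2)
      ((2*a*(v 0)) • pj 0 + (2*b*(v 1)) • pj 1 + (2*c*(v 2)) • pj 2) v := by
  have h0 : HasFDerivAt (fun w : E3 => w 0) (pj 0) v := (pj 0).hasFDerivAt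
  have h1 : HasFDerivAt (fun w : E3 => w 1) (pj 1) v := (pj 1).hasFDerivAt
  have h2 : HasFDerivAt (fun w : E3 => w 2) (pj 2) v := (pj 2).hasFDerivAt
  have H := (((h0.mul h0).const_mul a).add ((h1.mul h1).const_mul b)).add
    ((h2.mul h2).const_mul c)
  have heq : (fun u : E3 => a * (u 0)^2 + b * (u 1)^2 + c * (u 2)^2)
      = fun u : E3 => a * (u 0 * u 0) + b * (u 1 * u 1) + c * (u 2 * u 2) := by
    funext u; ring
  rw [heq]
  refine H.congr_fderiv ?_
  ext x
  simp [pj_apply]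
  ring

lemma hasFDerivAt_exp_quad (a b c : ℝ) (v : E3) :
    HasFDerivAt (fun u : E3 => Real.exp (a * (u 0)^2 + b * (u 1)^2 + c * (u 2)^2))
      (Real.exp (a * (v 0)^2 + b * (v 1)^2 + c * (v 2)^2) •
        ((2*a*(v 0)) • pj 0 + (2*b*(v 1)) • pj 1 + (2*c*(v 2)) • pj 2)) v :=
  (hasFDerivAt_quad a b c v).exp

lemma gradient_gauss_quad (a b c : ℝ) (v : E3) :
    gradient (fun u : E3 => Real.exp (a * (u 0)^2 + b * (u 1)^2 + c * (u 2)^2)) v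
      = Real.exp (a * (v 0)^2 + b * (v 1)^2 + c * (v 2)^2) •
          ((2*a*(v 0)) • EuclideanSpace.single 0 1 + (2*b*(v 1)) • EuclideanSpace.single 1 1
            + (2*c*(v 2)) • EuclideanSpace.single 2 1) := by
  refine HasGradientAt.gradient ?_
  rw [hasGradientAt_iff_hasFDerivAt]
  refine (hasFDerivAt_exp_quad a b c v).congr_fderiv ?_
  ext x
  simp [InnerProductSpace.toDual_apply_apply, inner_smul_left, inner_add_left,
    real_inner_smul_left, EuclideanSpace.inner_single_left, pj_apply]
  try ring

noncomputable def phiC : E3 → ℝ := fun w => Real.exp (-(w 0) ^ 2 - 2 * (w 1) ^ 2 - 3 * (w 2) ^ 2)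
noncomputable def fCf : E3 → ℝ := fun w => Real.exp (-(w 0) ^ 2 / 2 - (w 1) ^ 2 / 4 - (w 2) ^ 2 / 8)
noncomputable def gE : E3 → ℝ :=
  fun u => Real.exp (-(5/6) * (u 0) ^ 2 + -(17/36) * (u 1) ^ 2 + -(49/200) * (u 2) ^ 2)
noncomputable def SS : ℝ := Real.sqrt (π/(3/2)) * Real.sqrt (π/(9/4)) * Real.sqrt (π/(25/8))
noncomputable def dd : Fin 3 → ℝ := ![1, 1/2, 1/4]

lemma fin3mk0 (h : 0 < 3) : (⟨0, h⟩ : Fin 3) = (0 : Fin 3) := rfl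
lemma fin3mk1 (h : 1 < 3) : (⟨1, h⟩ : Fin 3) = (1 : Fin 3) := rfl
lemma fin3mk2 (h : 2 < 3) : (⟨2, h⟩ : Fin 3) = (2 : Fin 3) := rfl

noncomputable def hkern (v : E3) (i : Fin 3) (w : E3) : ℝ :=
  -(fCf v) * ((fCf w * phiC (v - w)) *
    ((((v-w) 0)^2 + ((v-w) 1)^2 + ((v-w) 2)^2) * (dd i * (v-w) i)
      - (((v-w) 0)^2 + ((v-w) 1)^2/2 + ((v-w) 2)^2/4) * (v-w) i))

lemma SS_eq : SS = 8/45 * Real.sqrt 3 * π ^ ((3:ℝ)/2) := by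
  rw [SS, ← Real.sqrt_mul (by positivity), ← Real.sqrt_mul (by positivity)]
  rw [show (π/(3/2)*(π/(9/4))*(π/(25/8))) = π^3 * (64/675) by ring]
  rw [Real.sqrt_mul (by positivity)]
  rw [show (64/675:ℝ) = (8/45)^2 * 3 by norm_num]
  rw [Real.sqrt_mul (by positivity), Real.sqrt_sq (by positivity)]
  rw [show π ^ ((3:ℝ)/2) = Real.sqrt (π^3) by
    rw [Real.sqrt_eq_rpow, ← Real.rpow_natCast π 3, ← Real.rpow_mul pi_nonneg]; norm_num]
  ring

lemma grad_fCf_apply (u : E3) (j : Fin 3) :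
    gradient fCf u j = fCf u * (-(dd j) * u j) := by
  have heq : fCf = fun u : E3 =>
      Real.exp ((-(1/2)) * (u 0)^2 + (-(1/4)) * (u 1)^2 + (-(1/8)) * (u 2)^2) := by
    funext x; show Real.exp _ = Real.exp _; congr 1; ring
  rw [heq, gradient_gauss_quad (-(1/2)) (-(1/4)) (-(1/8)) u]
  fin_cases j <;>
  · simp only [fin3mk0, fin3mk1, fin3mk2, PiLp.add_apply, PiLp.smul_apply, smul_eq_mul,
      EuclideanSpace.single_apply, dd, Matrix.cons_val_zero, Matrix.cons_val_one, Matrix.head_cons,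
        Matrix.cons_val_two, Matrix.tail_cons]
    norm_num [Fin.ext_iff] <;> ring

lemma exp_merge (v w : E3) :
    fCf w * phiC (v - w)
      = Real.exp (-(3/2) * ((v-w) 0) ^ 2 + (v 0) * ((v-w) 0) + (-(v 0)^2/2))
        * Real.exp (-(9/4) * ((v-w) 1) ^ 2 + (v 1/2) * ((v-w) 1) + (-(v 1)^2/4))
        * Real.exp (-(25/8) * ((v-w) 2) ^ 2 + (v 2/4) * ((v-w) 2) + (-(v 2)^2/8)) := by
  simp only [fCf, phiC, ← Real.exp_add]
  congr 1
  simp only [PiLp.sub_apply]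
  ring

lemma integrand_decomp (v w : E3) :
    phiC (v - w) • ((‖v - w‖ ^ 2) • (fCf w • gradient fCf v - fCf v • gradient fCf w)
      - (inner ℝ (v - w) (fCf w • gradient fCf v - fCf v • gradient fCf w) : ℝ) • (v - w))
    = ∑ i, hkern v i w • EuclideanSpace.single i 1 := by
  have hn : ‖v - w‖ ^ 2 = ((v-w) 0)^2 + ((v-w) 1)^2 + ((v-w) 2)^2 := by
    rw [EuclideanSpace.real_norm_sq_eq]
    simp [Fin.sum_univ_three]
  have key : ∀ j : Fin 3, (phiC (v - w) • ((‖v - w‖ ^ 2) • (fCf w • gradient fCf v - fCf v • gradient fCf w)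
      - (inner ℝ (v - w) (fCf w • gradient fCf v - fCf v • gradient fCf w) : ℝ) • (v - w))) j
      = (∑ i, hkern v i w • EuclideanSpace.single i 1) j := by
    intro j
    rw [hn]
    fin_cases j <;>
    · simp only [fin3mk0, fin3mk1, fin3mk2, hkern, dd, Fin.sum_univ_three, PiLp.add_apply,
        PiLp.sub_apply, PiLp.smul_apply, smul_eq_mul, EuclideanSpace.single_apply,
        PiLp.inner_apply, RCLike.inner_apply, conj_trivial, grad_fCf_apply,
        Matrix.cons_val_zero, Matrix.cons_val_one, Matrix.head_cons, Fin.isValue,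
        Matrix.cons_val_two, Matrix.tail_cons]
      norm_num [Fin.ext_iff] <;> ring
  exact PiLp.ext key

lemma intQ0 (v : E3) : (∫ w : E3, hkern v 0 w) = SS * gE v * ((-1/486) * (v 0 * (v 1 * v 1)) + (-1/2500) * (v 0 * (v 2 * v 2)) + (-52/675) * v 0) := by
  have h15 : (0:ℝ) < 3/2 := by norm_num
  have h94 : (0:ℝ) < 9/4 := by norm_num
  have h258 : (0:ℝ) < 25/8 := by norm_num
  have hint1 : Integrable fun x : Fin 3 → ℝ => ∏ j, (![fun t : ℝ => t * Real.exp (-(3/2) * t ^ 2 + (v 0) * t + (-(v 0)^2/2)), fun t : ℝ => t ^ 2 * Real.exp (-(9/4) * t ^ 2 + (v 1/2) * t + (-(v 1)^2/4)), fun t : ℝ => Real.exp (-(25/8) * t ^ 2 + (v 2/4) * t + (-(v 2)^2/8))] : Fin 3 → ℝ → ℝ) j (x j) := by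
    refine Integrable.fintype_prod fun j => ?_
    fin_cases j <;> simp only [Matrix.cons_val_zero, Matrix.cons_val_one, Matrix.head_cons, Matrix.cons_val_two, Matrix.tail_cons]
    · exact by simpa using integrable_pow_gauss_lin h15 (v 0) (-(v 0)^2/2) 1
    · exact integrable_pow_gauss_lin h94 (v 1/2) (-(v 1)^2/4) 2
    · exact by simpa using integrable_pow_gauss_lin h258 (v 2/4) (-(v 2)^2/8) 0
  have hint2 : Integrable fun x : Fin 3 → ℝ => ∏ j, (![fun t : ℝ => t * Real.exp (-(3/2) * t ^ 2 + (v 0) * t + (-(v 0)^2/2)), fun t : ℝ => Real.exp (-(9/4) * t ^ 2 + (v 1/2) * t + (-(v 1)^2/4)), fun t : ℝ => t ^ 2 * Real.exp (-(25/8) * t ^ 2 + (v 2/4) * t + (-(v 2)^2/8))] : Fin 3 → ℝ → ℝ) j (x j) := by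
    refine Integrable.fintype_prod fun j => ?_
    fin_cases j <;> simp only [Matrix.cons_val_zero, Matrix.cons_val_one, Matrix.head_cons, Matrix.cons_val_two, Matrix.tail_cons]
    · exact by simpa using integrable_pow_gauss_lin h15 (v 0) (-(v 0)^2/2) 1
    · exact by simpa using integrable_pow_gauss_lin h94 (v 1/2) (-(v 1)^2/4) 0
    · exact integrable_pow_gauss_lin h258 (v 2/4) (-(v 2)^2/8) 2
  have hcomp : (fun w : E3 => hkern v 0 w)
      = fun w : E3 => (fun x : Fin 3 → ℝ => (-(fCf v) * (1/2)) * ∏ j, (![fun t : ℝ => t * Real.exp (-(3/2) * t ^ 2 + (v 0) * t + (-(v 0)^2/2)), fun t : ℝ => t ^ 2 * Real.exp (-(9/4) * t ^ 2 + (v 1/2) * t + (-(v 1)^2/4)), fun t : ℝ => Real.exp (-(25/8) * t ^ 2 + (v 2/4) * t + (-(v 2)^2/8))] : Fin 3 → ℝ → ℝ) j (x j) + (-(fCf v) * (3/4)) * ∏ j, (![fun t : ℝ => t * Real.exp (-(3/2) * t ^ 2 + (v 0) * t + (-(v 0)^2/2)), fun t : ℝ => Real.exp (-(9/4) * t ^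 2 + (v 1/2) * t + (-(v 1)^2/4)), fun t : ℝ => t ^ 2 * Real.exp (-(25/8) * t ^ 2 + (v 2/4) * t + (-(v 2)^2/8))] : Fin 3 → ℝ → ℝ) j (x j)) ((MeasurableEquiv.toLp 2 (Fin 3 → ℝ)).symm (v - w)) := by
    funext w
    simp only [hkern, dd, MeasurableEquiv.toLp_symm_apply,
      Fin.prod_univ_three, Matrix.cons_val_zero, Matrix.cons_val_one, Matrix.head_cons,
      Fin.isValue, Matrix.cons_val_two, Matrix.tail_cons]
    rw [exp_merge]
    norm_num
    ring
  rw [hcomp,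
    integral_sub_left_eq_self (fun z : E3 => (fun x : Fin 3 → ℝ => (-(fCf v) * (1/2)) * ∏ j, (![fun t : ℝ => t * Real.exp (-(3/2) * t ^ 2 + (v 0) * t + (-(v 0)^2/2)), fun t : ℝ => t ^ 2 * Real.exp (-(9/4) * t ^ 2 + (v 1/2) * t + (-(v 1)^2/4)), fun t : ℝ => Real.exp (-(25/8) * t ^ 2 + (v 2/4) * t + (-(v 2)^2/8))] : Fin 3 → ℝ → ℝ) j (x j) + (-(fCf v) * (3/4)) * ∏ j, (![fun t : ℝ => t * Real.exp (-(3/2) * t ^ 2 + (v 0) * t + (-(v 0)^2/2)), fun t : ℝ => Real.exp (-(9/4) * t ^ 2 + (v 1/2) * t + (-(v 1)^2/4)), fun t : ℝ => t ^ 2 * Real.exp (-(25/8) * t ^ 2 + (v 2/4) * t + (-(v 2)^2/8))] : Fin 3 → ℝ → ℝ) j (x j)) ((MeasurableEquiv.toLp 2 (Fin 3 → ℝ)).symm z))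
      volume v,
    (EuclideanSpace.volume_preserving_symm_measurableEquiv_toLp (Fin 3)).integral_comp' (fun x : Fin 3 → ℝ => (-(fCf v) * (1/2)) * ∏ j, (![fun t : ℝ => t * Real.exp (-(3/2) * t ^ 2 + (v 0) * t + (-(v 0)^2/2)), fun t : ℝ => t ^ 2 * Real.exp (-(9/4) * t ^ 2 + (v 1/2) * t + (-(v 1)^2/4)), fun t : ℝ => Real.exp (-(25/8) * t ^ 2 + (v 2/4) * t + (-(v 2)^2/8))] : Fin 3 → ℝ → ℝ) j (x j) + (-(fCf v) * (3/4)) * ∏ j, (![fun t : ℝ => t * Real.exp (-(3/2) * t ^ 2 + (v 0) * t + (-(v 0)^2/2)), fun t : ℝ => Real.exp (-(9/4) * t ^ 2 + (v 1/2) * t + (-(v 1)^2/4)), fun t : ℝ => t ^ 2 * Real.exp (-(25/8) * t ^ 2 + (v 2/4) * t + (-(v 2)^2/8))] : Fin 3 → ℝ → ℝ) j (x j)),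
    integral_add (hint1.const_mul _) (hint2.const_mul _), integral_const_mul, integral_const_mul,
    MeasureTheory.integral_fintype_prod_volume_eq_prod (ι := Fin 3) (![fun t : ℝ => t * Real.exp (-(3/2) * t ^ 2 + (v 0) * t + (-(v 0)^2/2)), fun t : ℝ => t ^ 2 * Real.exp (-(9/4) * t ^ 2 + (v 1/2) * t + (-(v 1)^2/4)), fun t : ℝ => Real.exp (-(25/8) * t ^ 2 + (v 2/4) * t + (-(v 2)^2/8))] : Fin 3 → ℝ → ℝ),
    MeasureTheory.integral_fintype_prod_volume_eq_prod (ι := Fin 3) (![fun t : ℝ => t * Real.exp (-(3/2) * t ^ 2 + (v 0) * t + (-(v 0)^2/2)), fun t : ℝ => Real.exp (-(9/4) * t ^ 2 + (v 1/2) * t + (-(v 1)^2/4)), fun t : ℝ => t ^ 2 * Real.exp (-(25/8) * t ^ 2 + (v 2/4) * t + (-(v 2)^2/8))] : Fin 3 → ℝ → ℝ)]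
  rw [Fin.prod_univ_three, Fin.prod_univ_three]
  simp only [Matrix.cons_val_zero, Matrix.cons_val_one, Matrix.head_cons, Matrix.cons_val_two, Matrix.tail_cons]
  rw [integral_gauss_lin1 h15 (v 0) (-(v 0)^2/2),
    integral_gauss_lin2 h94 (v 1/2) (-(v 1)^2/4),
    integral_gauss_lin0 h258 (v 2/4) (-(v 2)^2/8),
    integral_gauss_lin0 h94 (v 1/2) (-(v 1)^2/4),
    integral_gauss_lin2 h258 (v 2/4) (-(v 2)^2/8)]
  have hexp : fCf v * (Real.exp ((v 0)^2/(4*(3/2)) + (-(v 0)^2/2))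
      * Real.exp ((v 1/2)^2/(4*(9/4)) + (-(v 1)^2/4)) * Real.exp ((v 2/4)^2/(4*(25/8)) + (-(v 2)^2/8))) = gE v := by
    simp only [fCf, gE, ← Real.exp_add]
    congr 1
    ring
  simp only [SS]
  linear_combination (Real.sqrt (π/(3/2)) * Real.sqrt (π/(9/4)) * Real.sqrt (π/(25/8))
    * ((-1/486) * (v 0 * (v 1 * v 1)) + (-1/2500) * (v 0 * (v 2 * v 2)) + (-52/675) * v 0)) * hexp

lemma intQ1 (v : E3) : (∫ w : E3, hkern v 1 w) = SS * gE v * ((1/162) * (v 0 * (v 0 * v 1)) + (-1/22500) * (v 1 * (v 2 * v 2)) + (19/1350) * v 1) := by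
  have h15 : (0:ℝ) < 3/2 := by norm_num
  have h94 : (0:ℝ) < 9/4 := by norm_num
  have h258 : (0:ℝ) < 25/8 := by norm_num
  have hint1 : Integrable fun x : Fin 3 → ℝ => ∏ j, (![fun t : ℝ => t ^ 2 * Real.exp (-(3/2) * t ^ 2 + (v 0) * t + (-(v 0)^2/2)), fun t : ℝ => t * Real.exp (-(9/4) * t ^ 2 + (v 1/2) * t + (-(v 1)^2/4)), fun t : ℝ => Real.exp (-(25/8) * t ^ 2 + (v 2/4) * t + (-(v 2)^2/8))] : Fin 3 → ℝ → ℝ) j (x j) := by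
    refine Integrable.fintype_prod fun j => ?_
    fin_cases j <;> simp only [Matrix.cons_val_zero, Matrix.cons_val_one, Matrix.head_cons, Matrix.cons_val_two, Matrix.tail_cons]
    · exact integrable_pow_gauss_lin h15 (v 0) (-(v 0)^2/2) 2
    · exact by simpa using integrable_pow_gauss_lin h94 (v 1/2) (-(v 1)^2/4) 1
    · exact by simpa using integrable_pow_gauss_lin h258 (v 2/4) (-(v 2)^2/8) 0
  have hint2 : Integrable fun x : Fin 3 → ℝ => ∏ j, (![fun t : ℝ => Real.exp (-(3/2) * t ^ 2 + (v 0) * t + (-(v 0)^2/2)), fun t : ℝ => t * Real.exp (-(9/4) * t ^ 2 + (v 1/2) * t + (-(v 1)^2/4)), fun t : ℝ => t ^ 2 * Real.exp (-(25/8) * t ^ 2 + (v 2/4) * t + (-(v 2)^2/8))] : Fin 3 → ℝ → ℝ) j (x j) := by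
    refine Integrable.fintype_prod fun j => ?_
    fin_cases j <;> simp only [Matrix.cons_val_zero, Matrix.cons_val_one, Matrix.head_cons, Matrix.cons_val_two, Matrix.tail_cons]
    · exact by simpa using integrable_pow_gauss_lin h15 (v 0) (-(v 0)^2/2) 0
    · exact by simpa using integrable_pow_gauss_lin h94 (v 1/2) (-(v 1)^2/4) 1
    · exact integrable_pow_gauss_lin h258 (v 2/4) (-(v 2)^2/8) 2
  have hcomp : (fun w : E3 => hkern v 1 w)
      = fun w : E3 => (fun x : Fin 3 → ℝ => (-(fCf v) * (-1/2)) * ∏ j, (![fun t : ℝ => t ^ 2 * Real.exp (-(3/2) * t ^ 2 + (v 0) * t + (-(v 0)^2/2)), fun t : ℝ => t * Real.exp (-(9/4) * t ^ 2 + (v 1/2) * t + (-(v 1)^2/4)), fun t : ℝ => Real.exp (-(25/8) * t ^ 2 + (v 2/4) * t + (-(v 2)^2/8))] : Fin 3 → ℝ → ℝ) j (x j) + (-(fCf v) * (1/4)) * ∏ j, (![fun t : ℝ => Real.exp (-(3/2) * t ^ 2 + (v 0) * t + (-(v 0)^2/2)), fun t : ℝ => t * Real.exp (-(9/4) * t ^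 2 + (v 1/2) * t + (-(v 1)^2/4)), fun t : ℝ => t ^ 2 * Real.exp (-(25/8) * t ^ 2 + (v 2/4) * t + (-(v 2)^2/8))] : Fin 3 → ℝ → ℝ) j (x j)) ((MeasurableEquiv.toLp 2 (Fin 3 → ℝ)).symm (v - w)) := by
    funext w
    simp only [hkern, dd, MeasurableEquiv.toLp_symm_apply,
      Fin.prod_univ_three, Matrix.cons_val_zero, Matrix.cons_val_one, Matrix.head_cons,
      Fin.isValue, Matrix.cons_val_two, Matrix.tail_cons]
    rw [exp_merge]
    norm_num
    ring
  rw [hcomp,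
    integral_sub_left_eq_self (fun z : E3 => (fun x : Fin 3 → ℝ => (-(fCf v) * (-1/2)) * ∏ j, (![fun t : ℝ => t ^ 2 * Real.exp (-(3/2) * t ^ 2 + (v 0) * t + (-(v 0)^2/2)), fun t : ℝ => t * Real.exp (-(9/4) * t ^ 2 + (v 1/2) * t + (-(v 1)^2/4)), fun t : ℝ => Real.exp (-(25/8) * t ^ 2 + (v 2/4) * t + (-(v 2)^2/8))] : Fin 3 → ℝ → ℝ) j (x j) + (-(fCf v) * (1/4)) * ∏ j, (![fun t : ℝ => Real.exp (-(3/2) * t ^ 2 + (v 0) * t + (-(v 0)^2/2)), fun t : ℝ => t * Real.exp (-(9/4) * t ^ 2 + (v 1/2) * t + (-(v 1)^2/4)), fun t : ℝ => t ^ 2 * Real.exp (-(25/8) * t ^ 2 + (v 2/4) * t + (-(v 2)^2/8))] : Fin 3 → ℝ → ℝ) j (x j)) ((MeasurableEquiv.toLp 2 (Fin 3 → ℝ)).symm z))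
      volume v,
    (EuclideanSpace.volume_preserving_symm_measurableEquiv_toLp (Fin 3)).integral_comp' (fun x : Fin 3 → ℝ => (-(fCf v) * (-1/2)) * ∏ j, (![fun t : ℝ => t ^ 2 * Real.exp (-(3/2) * t ^ 2 + (v 0) * t + (-(v 0)^2/2)), fun t : ℝ => t * Real.exp (-(9/4) * t ^ 2 + (v 1/2) * t + (-(v 1)^2/4)), fun t : ℝ => Real.exp (-(25/8) * t ^ 2 + (v 2/4) * t + (-(v 2)^2/8))] : Fin 3 → ℝ → ℝ) j (x j) + (-(fCf v) * (1/4)) * ∏ j, (![fun t : ℝ => Real.exp (-(3/2) * t ^ 2 + (v 0) * t + (-(v 0)^2/2)), fun t : ℝ => t * Real.exp (-(9/4) * t ^ 2 + (v 1/2) * t + (-(v 1)^2/4)), fun t : ℝ => t ^ 2 * Real.exp (-(25/8) * t ^ 2 + (v 2/4) * t + (-(v 2)^2/8))] : Fin 3 → ℝ → ℝ) j (x j)),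
    integral_add (hint1.const_mul _) (hint2.const_mul _), integral_const_mul, integral_const_mul,
    MeasureTheory.integral_fintype_prod_volume_eq_prod (ι := Fin 3) (![fun t : ℝ => t ^ 2 * Real.exp (-(3/2) * t ^ 2 + (v 0) * t + (-(v 0)^2/2)), fun t : ℝ => t * Real.exp (-(9/4) * t ^ 2 + (v 1/2) * t + (-(v 1)^2/4)), fun t : ℝ => Real.exp (-(25/8) * t ^ 2 + (v 2/4) * t + (-(v 2)^2/8))] : Fin 3 → ℝ → ℝ),
    MeasureTheory.integral_fintype_prod_volume_eq_prod (ι := Fin 3) (![fun t : ℝ => Real.exp (-(3/2) * t ^ 2 + (v 0) * t + (-(v 0)^2/2)), fun t : ℝ => t * Real.exp (-(9/4) * t ^ 2 + (v 1/2) * t + (-(v 1)^2/4)), fun t : ℝ => t ^ 2 * Real.exp (-(25/8) * t ^ 2 + (v 2/4) * t + (-(v 2)^2/8))] : Fin 3 → ℝ → ℝ)]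
  rw [Fin.prod_univ_three, Fin.prod_univ_three]
  simp only [Matrix.cons_val_zero, Matrix.cons_val_one, Matrix.head_cons, Matrix.cons_val_two, Matrix.tail_cons]
  rw [integral_gauss_lin2 h15 (v 0) (-(v 0)^2/2),
    integral_gauss_lin1 h94 (v 1/2) (-(v 1)^2/4),
    integral_gauss_lin0 h258 (v 2/4) (-(v 2)^2/8),
    integral_gauss_lin0 h15 (v 0) (-(v 0)^2/2),
    integral_gauss_lin2 h258 (v 2/4) (-(v 2)^2/8)]
  have hexp : fCf v * (Real.exp ((v 0)^2/(4*(3/2)) + (-(v 0)^2/2))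
      * Real.exp ((v 1/2)^2/(4*(9/4)) + (-(v 1)^2/4)) * Real.exp ((v 2/4)^2/(4*(25/8)) + (-(v 2)^2/8))) = gE v := by
    simp only [fCf, gE, ← Real.exp_add]
    congr 1
    ring
  simp only [SS]
  linear_combination (Real.sqrt (π/(3/2)) * Real.sqrt (π/(9/4)) * Real.sqrt (π/(25/8))
    * ((1/162) * (v 0 * (v 0 * v 1)) + (-1/22500) * (v 1 * (v 2 * v 2)) + (19/1350) * v 1)) * hexp

lemma intQ2 (v : E3) : (∫ w : E3, hkern v 2 w) = SS * gE v * ((1/300) * (v 0 * (v 0 * v 2)) + (1/8100) * (v 1 * (v 1 * v 2)) + (11/900) * v 2) := by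
  have h15 : (0:ℝ) < 3/2 := by norm_num
  have h94 : (0:ℝ) < 9/4 := by norm_num
  have h258 : (0:ℝ) < 25/8 := by norm_num
  have hint1 : Integrable fun x : Fin 3 → ℝ => ∏ j, (![fun t : ℝ => t ^ 2 * Real.exp (-(3/2) * t ^ 2 + (v 0) * t + (-(v 0)^2/2)), fun t : ℝ => Real.exp (-(9/4) * t ^ 2 + (v 1/2) * t + (-(v 1)^2/4)), fun t : ℝ => t * Real.exp (-(25/8) * t ^ 2 + (v 2/4) * t + (-(v 2)^2/8))] : Fin 3 → ℝ → ℝ) j (x j) := by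
    refine Integrable.fintype_prod fun j => ?_
    fin_cases j <;> simp only [Matrix.cons_val_zero, Matrix.cons_val_one, Matrix.head_cons, Matrix.cons_val_two, Matrix.tail_cons]
    · exact integrable_pow_gauss_lin h15 (v 0) (-(v 0)^2/2) 2
    · exact by simpa using integrable_pow_gauss_lin h94 (v 1/2) (-(v 1)^2/4) 0
    · exact by simpa using integrable_pow_gauss_lin h258 (v 2/4) (-(v 2)^2/8) 1
  have hint2 : Integrable fun x : Fin 3 → ℝ => ∏ j, (![fun t : ℝ => Real.exp (-(3/2) * t ^ 2 + (v 0) * t + (-(v 0)^2/2)), fun t : ℝ => t ^ 2 * Real.exp (-(9/4) * t ^ 2 + (v 1/2) * t + (-(v 1)^2/4)), fun t : ℝ => t * Real.exp (-(25/8) * t ^ 2 + (v 2/4) * t + (-(v 2)^2/8))] : Fin 3 → ℝ → ℝ) j (x j) := by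
    refine Integrable.fintype_prod fun j => ?_
    fin_cases j <;> simp only [Matrix.cons_val_zero, Matrix.cons_val_one, Matrix.head_cons, Matrix.cons_val_two, Matrix.tail_cons]
    · exact by simpa using integrable_pow_gauss_lin h15 (v 0) (-(v 0)^2/2) 0
    · exact integrable_pow_gauss_lin h94 (v 1/2) (-(v 1)^2/4) 2
    · exact by simpa using integrable_pow_gauss_lin h258 (v 2/4) (-(v 2)^2/8) 1
  have hcomp : (fun w : E3 => hkern v 2 w)
      = fun w : E3 => (fun x : Fin 3 → ℝ => (-(fCf v) * (-3/4)) * ∏ j, (![fun t : ℝ => t ^ 2 * Real.exp (-(3/2) * t ^ 2 + (v 0) * t + (-(v 0)^2/2)), fun t : ℝ => Real.exp (-(9/4) * t ^ 2 + (v 1/2) * t + (-(v 1)^2/4)), fun t : ℝ => t * Real.exp (-(25/8) * t ^ 2 + (v 2/4) * t + (-(v 2)^2/8))] : Fin 3 → ℝ → ℝ) j (x j) + (-(fCf v) * (-1/4)) * ∏ j, (![fun t : ℝ => Real.exp (-(3/2) * t ^ 2 + (v 0) * t + (-(v 0)^2/2)), fun t : ℝ => t ^ 2 * Real.exp (-(9/4)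 * t ^ 2 + (v 1/2) * t + (-(v 1)^2/4)), fun t : ℝ => t * Real.exp (-(25/8) * t ^ 2 + (v 2/4) * t + (-(v 2)^2/8))] : Fin 3 → ℝ → ℝ) j (x j)) ((MeasurableEquiv.toLp 2 (Fin 3 → ℝ)).symm (v - w)) := by
    funext w
    simp only [hkern, dd, MeasurableEquiv.toLp_symm_apply,
      Fin.prod_univ_three, Matrix.cons_val_zero, Matrix.cons_val_one, Matrix.head_cons,
      Fin.isValue, Matrix.cons_val_two, Matrix.tail_cons]
    rw [exp_merge]
    norm_num
    ring
  rw [hcomp,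
    integral_sub_left_eq_self (fun z : E3 => (fun x : Fin 3 → ℝ => (-(fCf v) * (-3/4)) * ∏ j, (![fun t : ℝ => t ^ 2 * Real.exp (-(3/2) * t ^ 2 + (v 0) * t + (-(v 0)^2/2)), fun t : ℝ => Real.exp (-(9/4) * t ^ 2 + (v 1/2) * t + (-(v 1)^2/4)), fun t : ℝ => t * Real.exp (-(25/8) * t ^ 2 + (v 2/4) * t + (-(v 2)^2/8))] : Fin 3 → ℝ → ℝ) j (x j) + (-(fCf v) * (-1/4)) * ∏ j, (![fun t : ℝ => Real.exp (-(3/2) * t ^ 2 + (v 0) * t + (-(v 0)^2/2)), fun t : ℝ => t ^ 2 * Real.exp (-(9/4) * t ^ 2 + (v 1/2) * t + (-(v 1)^2/4)), fun t : ℝ => t * Real.exp (-(25/8) * t ^ 2 + (v 2/4) * t + (-(v 2)^2/8))] : Fin 3 → ℝ → ℝ) j (x j)) ((MeasurableEquiv.toLp 2 (Fin 3 → ℝ)).symm z))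
      volume v,
    (EuclideanSpace.volume_preserving_symm_measurableEquiv_toLp (Fin 3)).integral_comp' (fun x : Fin 3 → ℝ => (-(fCf v) * (-3/4)) * ∏ j, (![fun t : ℝ => t ^ 2 * Real.exp (-(3/2) * t ^ 2 + (v 0) * t + (-(v 0)^2/2)), fun t : ℝ => Real.exp (-(9/4) * t ^ 2 + (v 1/2) * t + (-(v 1)^2/4)), fun t : ℝ => t * Real.exp (-(25/8) * t ^ 2 + (v 2/4) * t + (-(v 2)^2/8))] : Fin 3 → ℝ → ℝ) j (x j) + (-(fCf v) * (-1/4)) * ∏ j, (![fun t : ℝ => Real.exp (-(3/2) * t ^ 2 + (v 0) * t + (-(v 0)^2/2)), fun t : ℝ => t ^ 2 * Real.exp (-(9/4) * t ^ 2 + (v 1/2) * t + (-(v 1)^2/4)), fun t : ℝ => t * Real.exp (-(25/8) * t ^ 2 + (v 2/4) * t + (-(v 2)^2/8))] : Fin 3 → ℝ → ℝ) j (x j)),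
    integral_add (hint1.const_mul _) (hint2.const_mul _), integral_const_mul, integral_const_mul,
    MeasureTheory.integral_fintype_prod_volume_eq_prod (ι := Fin 3) (![fun t : ℝ => t ^ 2 * Real.exp (-(3/2) * t ^ 2 + (v 0) * t + (-(v 0)^2/2)), fun t : ℝ => Real.exp (-(9/4) * t ^ 2 + (v 1/2) * t + (-(v 1)^2/4)), fun t : ℝ => t * Real.exp (-(25/8) * t ^ 2 + (v 2/4) * t + (-(v 2)^2/8))] : Fin 3 → ℝ → ℝ),
    MeasureTheory.integral_fintype_prod_volume_eq_prod (ι := Fin 3) (![fun t : ℝ => Real.exp (-(3/2) * t ^ 2 + (v 0) * t + (-(v 0)^2/2)), fun t : ℝ => t ^ 2 * Real.exp (-(9/4) * t ^ 2 + (v 1/2) * t + (-(v 1)^2/4)), fun t : ℝ => t * Real.exp (-(25/8) * t ^ 2 + (v 2/4) * t + (-(v 2)^2/8))] : Fin 3 → ℝ → ℝ)]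
  rw [Fin.prod_univ_three, Fin.prod_univ_three]
  simp only [Matrix.cons_val_zero, Matrix.cons_val_one, Matrix.head_cons, Matrix.cons_val_two, Matrix.tail_cons]
  rw [integral_gauss_lin2 h15 (v 0) (-(v 0)^2/2),
    integral_gauss_lin0 h94 (v 1/2) (-(v 1)^2/4),
    integral_gauss_lin1 h258 (v 2/4) (-(v 2)^2/8),
    integral_gauss_lin0 h15 (v 0) (-(v 0)^2/2),
    integral_gauss_lin2 h94 (v 1/2) (-(v 1)^2/4)]
  have hexp : fCf v * (Real.exp ((v 0)^2/(4*(3/2)) + (-(v 0)^2/2))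
      * Real.exp ((v 1/2)^2/(4*(9/4)) + (-(v 1)^2/4)) * Real.exp ((v 2/4)^2/(4*(25/8)) + (-(v 2)^2/8))) = gE v := by
    simp only [fCf, gE, ← Real.exp_add]
    congr 1
    ring
  simp only [SS]
  linear_combination (Real.sqrt (π/(3/2)) * Real.sqrt (π/(9/4)) * Real.sqrt (π/(25/8))
    * ((1/300) * (v 0 * (v 0 * v 2)) + (1/8100) * (v 1 * (v 1 * v 2)) + (11/900) * v 2)) * hexp

lemma hkern_int0 (v : E3) : Integrable (fun w : E3 => hkern v 0 w) := by
  have h15 : (0:ℝ) < 3/2 := by norm_num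
  have h94 : (0:ℝ) < 9/4 := by norm_num
  have h258 : (0:ℝ) < 25/8 := by norm_num
  have hint1 : Integrable fun x : Fin 3 → ℝ => ∏ j, (![fun t : ℝ => t * Real.exp (-(3/2) * t ^ 2 + (v 0) * t + (-(v 0)^2/2)), fun t : ℝ => t ^ 2 * Real.exp (-(9/4) * t ^ 2 + (v 1/2) * t + (-(v 1)^2/4)), fun t : ℝ => Real.exp (-(25/8) * t ^ 2 + (v 2/4) * t + (-(v 2)^2/8))] : Fin 3 → ℝ → ℝ) j (x j) := by
    refine Integrable.fintype_prod fun j => ?_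
    fin_cases j <;> simp only [Matrix.cons_val_zero, Matrix.cons_val_one, Matrix.head_cons, Matrix.cons_val_two, Matrix.tail_cons]
    · exact by simpa using integrable_pow_gauss_lin h15 (v 0) (-(v 0)^2/2) 1
    · exact integrable_pow_gauss_lin h94 (v 1/2) (-(v 1)^2/4) 2
    · exact by simpa using integrable_pow_gauss_lin h258 (v 2/4) (-(v 2)^2/8) 0
  have hint2 : Integrable fun x : Fin 3 → ℝ => ∏ j, (![fun t : ℝ => t * Real.exp (-(3/2) * t ^ 2 + (v 0) * t + (-(v 0)^2/2)), fun t : ℝ => Real.exp (-(9/4) * t ^ 2 + (v 1/2) * t + (-(v 1)^2/4)), fun t : ℝ => t ^ 2 * Real.exp (-(25/8) * t ^ 2 + (v 2/4) * t + (-(v 2)^2/8))] : Fin 3 → ℝ → ℝ) j (x j) := by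
    refine Integrable.fintype_prod fun j => ?_
    fin_cases j <;> simp only [Matrix.cons_val_zero, Matrix.cons_val_one, Matrix.head_cons, Matrix.cons_val_two, Matrix.tail_cons]
    · exact by simpa using integrable_pow_gauss_lin h15 (v 0) (-(v 0)^2/2) 1
    · exact by simpa using integrable_pow_gauss_lin h94 (v 1/2) (-(v 1)^2/4) 0
    · exact integrable_pow_gauss_lin h258 (v 2/4) (-(v 2)^2/8) 2
  have hcomp : (fun w : E3 => hkern v 0 w)
      = fun w : E3 => (fun x : Fin 3 → ℝ => (-(fCf v) * (1/2)) * ∏ j, (![fun t : ℝ => t * Real.exp (-(3/2) * t ^ 2 + (v 0) * t + (-(v 0)^2/2)), fun t : ℝ => t ^ 2 * Real.exp (-(9/4) * t ^ 2 + (v 1/2) * t + (-(v 1)^2/4)), fun t : ℝ => Real.exp (-(25/8) * t ^ 2 + (v 2/4) * t + (-(v 2)^2/8))] : Fin 3 → ℝ → ℝ) j (x j) + (-(fCf v) * (3/4)) * ∏ j, (![fun t : ℝ => t * Real.exp (-(3/2) * t ^ 2 + (v 0) * t + (-(v 0)^2/2)), fun t : ℝ => Real.exp (-(9/4) * t ^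 2 + (v 1/2) * t + (-(v 1)^2/4)), fun t : ℝ => t ^ 2 * Real.exp (-(25/8) * t ^ 2 + (v 2/4) * t + (-(v 2)^2/8))] : Fin 3 → ℝ → ℝ) j (x j)) ((MeasurableEquiv.toLp 2 (Fin 3 → ℝ)).symm (v - w)) := by
    funext w
    simp only [hkern, dd, MeasurableEquiv.toLp_symm_apply,
      Fin.prod_univ_three, Matrix.cons_val_zero, Matrix.cons_val_one, Matrix.head_cons,
      Matrix.cons_val_two, Matrix.tail_cons, Fin.isValue]
    rw [exp_merge]
    norm_num
    ring
  rw [hcomp]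
  have hG : Integrable (fun x : Fin 3 → ℝ => (-(fCf v) * (1/2)) * ∏ j, (![fun t : ℝ => t * Real.exp (-(3/2) * t ^ 2 + (v 0) * t + (-(v 0)^2/2)), fun t : ℝ => t ^ 2 * Real.exp (-(9/4) * t ^ 2 + (v 1/2) * t + (-(v 1)^2/4)), fun t : ℝ => Real.exp (-(25/8) * t ^ 2 + (v 2/4) * t + (-(v 2)^2/8))] : Fin 3 → ℝ → ℝ) j (x j) + (-(fCf v) * (3/4)) * ∏ j, (![fun t : ℝ => t * Real.exp (-(3/2) * t ^ 2 + (v 0) * t + (-(v 0)^2/2)), fun t : ℝ => Real.exp (-(9/4) * t ^ 2 + (v 1/2) * t + (-(v 1)^2/4)), fun t : ℝ => t ^ 2 * Real.exp (-(25/8) * t ^ 2 + (v 2/4) * t + (-(v 2)^2/8))] : Fin 3 → ℝ → ℝ) j (x j)) := (hint1.const_mul _).add (hint2.const_mul _)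
  have hG2 : Integrable (fun z : E3 => (fun x : Fin 3 → ℝ => (-(fCf v) * (1/2)) * ∏ j, (![fun t : ℝ => t * Real.exp (-(3/2) * t ^ 2 + (v 0) * t + (-(v 0)^2/2)), fun t : ℝ => t ^ 2 * Real.exp (-(9/4) * t ^ 2 + (v 1/2) * t + (-(v 1)^2/4)), fun t : ℝ => Real.exp (-(25/8) * t ^ 2 + (v 2/4) * t + (-(v 2)^2/8))] : Fin 3 → ℝ → ℝ) j (x j) + (-(fCf v) * (3/4)) * ∏ j, (![fun t : ℝ => t * Real.exp (-(3/2) * t ^ 2 + (v 0) * t + (-(v 0)^2/2)), fun t : ℝ => Real.exp (-(9/4) * t ^ 2 + (v 1/2) * t + (-(v 1)^2/4)), fun t : ℝ => t ^ 2 * Real.exp (-(25/8) * t ^ 2 + (v 2/4) * t + (-(v 2)^2/8))] : Fin 3 → ℝ → ℝ) j (x j)) ((MeasurableEquiv.toLp 2 (Fin 3 → ℝ)).symm z)) :=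
    ((EuclideanSpace.volume_preserving_symm_measurableEquiv_toLp (Fin 3)).integrable_comp_emb
      (MeasurableEquiv.measurableEmbedding _)).mpr hG
  exact hG2.comp_sub_left v

lemma hkern_int1 (v : E3) : Integrable (fun w : E3 => hkern v 1 w) := by
  have h15 : (0:ℝ) < 3/2 := by norm_num
  have h94 : (0:ℝ) < 9/4 := by norm_num
  have h258 : (0:ℝ) < 25/8 := by norm_num
  have hint1 : Integrable fun x : Fin 3 → ℝ => ∏ j, (![fun t : ℝ => t ^ 2 * Real.exp (-(3/2) * t ^ 2 + (v 0) * t + (-(v 0)^2/2)), fun t : ℝ => t * Real.exp (-(9/4) * t ^ 2 + (v 1/2) * t + (-(v 1)^2/4)), fun t : ℝ => Real.exp (-(25/8) * t ^ 2 + (v 2/4) * t + (-(v 2)^2/8))] : Fin 3 → ℝ → ℝ) j (x j) := by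
    refine Integrable.fintype_prod fun j => ?_
    fin_cases j <;> simp only [Matrix.cons_val_zero, Matrix.cons_val_one, Matrix.head_cons, Matrix.cons_val_two, Matrix.tail_cons]
    · exact integrable_pow_gauss_lin h15 (v 0) (-(v 0)^2/2) 2
    · exact by simpa using integrable_pow_gauss_lin h94 (v 1/2) (-(v 1)^2/4) 1
    · exact by simpa using integrable_pow_gauss_lin h258 (v 2/4) (-(v 2)^2/8) 0
  have hint2 : Integrable fun x : Fin 3 → ℝ => ∏ j, (![fun t : ℝ => Real.exp (-(3/2) * t ^ 2 + (v 0) * t + (-(v 0)^2/2)), fun t : ℝ => t * Real.exp (-(9/4) * t ^ 2 + (v 1/2) * t + (-(v 1)^2/4)), fun t : ℝ => t ^ 2 * Real.exp (-(25/8) * t ^ 2 + (v 2/4) * t + (-(v 2)^2/8))] : Fin 3 → ℝ → ℝ) j (x j) := by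
    refine Integrable.fintype_prod fun j => ?_
    fin_cases j <;> simp only [Matrix.cons_val_zero, Matrix.cons_val_one, Matrix.head_cons, Matrix.cons_val_two, Matrix.tail_cons]
    · exact by simpa using integrable_pow_gauss_lin h15 (v 0) (-(v 0)^2/2) 0
    · exact by simpa using integrable_pow_gauss_lin h94 (v 1/2) (-(v 1)^2/4) 1
    · exact integrable_pow_gauss_lin h258 (v 2/4) (-(v 2)^2/8) 2
  have hcomp : (fun w : E3 => hkern v 1 w)
      = fun w : E3 => (fun x : Fin 3 → ℝ => (-(fCf v) * (-1/2)) * ∏ j, (![fun t : ℝ => t ^ 2 * Real.exp (-(3/2) * t ^ 2 + (v 0) * t + (-(v 0)^2/2)), fun t : ℝ => t * Real.exp (-(9/4) * t ^ 2 + (v 1/2) * t + (-(v 1)^2/4)), fun t : ℝ => Real.exp (-(25/8) * t ^ 2 + (v 2/4) * t + (-(v 2)^2/8))] : Fin 3 → ℝ → ℝ) j (x j) + (-(fCf v) * (1/4)) * ∏ j, (![fun t : ℝ => Real.exp (-(3/2) * t ^ 2 + (v 0) * t + (-(v 0)^2/2)), fun t : ℝ => t * Real.exp (-(9/4) * t ^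 2 + (v 1/2) * t + (-(v 1)^2/4)), fun t : ℝ => t ^ 2 * Real.exp (-(25/8) * t ^ 2 + (v 2/4) * t + (-(v 2)^2/8))] : Fin 3 → ℝ → ℝ) j (x j)) ((MeasurableEquiv.toLp 2 (Fin 3 → ℝ)).symm (v - w)) := by
    funext w
    simp only [hkern, dd, MeasurableEquiv.toLp_symm_apply,
      Fin.prod_univ_three, Matrix.cons_val_zero, Matrix.cons_val_one, Matrix.head_cons,
      Matrix.cons_val_two, Matrix.tail_cons, Fin.isValue]
    rw [exp_merge]
    norm_num
    ring
  rw [hcomp]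
  have hG : Integrable (fun x : Fin 3 → ℝ => (-(fCf v) * (-1/2)) * ∏ j, (![fun t : ℝ => t ^ 2 * Real.exp (-(3/2) * t ^ 2 + (v 0) * t + (-(v 0)^2/2)), fun t : ℝ => t * Real.exp (-(9/4) * t ^ 2 + (v 1/2) * t + (-(v 1)^2/4)), fun t : ℝ => Real.exp (-(25/8) * t ^ 2 + (v 2/4) * t + (-(v 2)^2/8))] : Fin 3 → ℝ → ℝ) j (x j) + (-(fCf v) * (1/4)) * ∏ j, (![fun t : ℝ => Real.exp (-(3/2) * t ^ 2 + (v 0) * t + (-(v 0)^2/2)), fun t : ℝ => t * Real.exp (-(9/4) * t ^ 2 + (v 1/2) * t + (-(v 1)^2/4)), fun t : ℝ => t ^ 2 * Real.exp (-(25/8) * t ^ 2 + (v 2/4) * t + (-(v 2)^2/8))] : Fin 3 → ℝ → ℝ) j (x j)) := (hint1.const_mul _).add (hint2.const_mul _)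
  have hG2 : Integrable (fun z : E3 => (fun x : Fin 3 → ℝ => (-(fCf v) * (-1/2)) * ∏ j, (![fun t : ℝ => t ^ 2 * Real.exp (-(3/2) * t ^ 2 + (v 0) * t + (-(v 0)^2/2)), fun t : ℝ => t * Real.exp (-(9/4) * t ^ 2 + (v 1/2) * t + (-(v 1)^2/4)), fun t : ℝ => Real.exp (-(25/8) * t ^ 2 + (v 2/4) * t + (-(v 2)^2/8))] : Fin 3 → ℝ → ℝ) j (x j) + (-(fCf v) * (1/4)) * ∏ j, (![fun t : ℝ => Real.exp (-(3/2) * t ^ 2 + (v 0) * t + (-(v 0)^2/2)), fun t : ℝ => t * Real.exp (-(9/4) * t ^ 2 + (v 1/2) * t + (-(v 1)^2/4)), fun t : ℝ => t ^ 2 * Real.exp (-(25/8) * t ^ 2 + (v 2/4) * t + (-(v 2)^2/8))] : Fin 3 → ℝ → ℝ) j (x j)) ((MeasurableEquiv.toLp 2 (Fin 3 → ℝ)).symm z)) :=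
    ((EuclideanSpace.volume_preserving_symm_measurableEquiv_toLp (Fin 3)).integrable_comp_emb
      (MeasurableEquiv.measurableEmbedding _)).mpr hG
  exact hG2.comp_sub_left v

lemma hkern_int2 (v : E3) : Integrable (fun w : E3 => hkern v 2 w) := by
  have h15 : (0:ℝ) < 3/2 := by norm_num
  have h94 : (0:ℝ) < 9/4 := by norm_num
  have h258 : (0:ℝ) < 25/8 := by norm_num
  have hint1 : Integrable fun x : Fin 3 → ℝ => ∏ j, (![fun t : ℝ => t ^ 2 * Real.exp (-(3/2) * t ^ 2 + (v 0) * t + (-(v 0)^2/2)), fun t : ℝ => Real.exp (-(9/4) * t ^ 2 + (v 1/2) * t + (-(v 1)^2/4)), fun t : ℝ => t * Real.exp (-(25/8) * t ^ 2 + (v 2/4) * t + (-(v 2)^2/8))] : Fin 3 → ℝ → ℝ) j (x j) := by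
    refine Integrable.fintype_prod fun j => ?_
    fin_cases j <;> simp only [Matrix.cons_val_zero, Matrix.cons_val_one, Matrix.head_cons, Matrix.cons_val_two, Matrix.tail_cons]
    · exact integrable_pow_gauss_lin h15 (v 0) (-(v 0)^2/2) 2
    · exact by simpa using integrable_pow_gauss_lin h94 (v 1/2) (-(v 1)^2/4) 0
    · exact by simpa using integrable_pow_gauss_lin h258 (v 2/4) (-(v 2)^2/8) 1
  have hint2 : Integrable fun x : Fin 3 → ℝ => ∏ j, (![fun t : ℝ => Real.exp (-(3/2) * t ^ 2 + (v 0) * t + (-(v 0)^2/2)), fun t : ℝ => t ^ 2 * Real.exp (-(9/4) * t ^ 2 + (v 1/2) * t + (-(v 1)^2/4)), fun t : ℝ => t * Real.exp (-(25/8) * t ^ 2 + (v 2/4) * t + (-(v 2)^2/8))] : Fin 3 → ℝ → ℝ) j (x j) := by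
    refine Integrable.fintype_prod fun j => ?_
    fin_cases j <;> simp only [Matrix.cons_val_zero, Matrix.cons_val_one, Matrix.head_cons, Matrix.cons_val_two, Matrix.tail_cons]
    · exact by simpa using integrable_pow_gauss_lin h15 (v 0) (-(v 0)^2/2) 0
    · exact integrable_pow_gauss_lin h94 (v 1/2) (-(v 1)^2/4) 2
    · exact by simpa using integrable_pow_gauss_lin h258 (v 2/4) (-(v 2)^2/8) 1
  have hcomp : (fun w : E3 => hkern v 2 w)
      = fun w : E3 => (fun x : Fin 3 → ℝ => (-(fCf v) * (-3/4)) * ∏ j, (![fun t : ℝ => t ^ 2 * Real.exp (-(3/2) * t ^ 2 + (v 0) * t + (-(v 0)^2/2)), fun t : ℝ => Real.exp (-(9/4) * t ^ 2 + (v 1/2) * t + (-(v 1)^2/4)), fun t : ℝ => t * Real.exp (-(25/8) * t ^ 2 + (v 2/4) * t + (-(v 2)^2/8))] : Fin 3 → ℝ → ℝ) j (x j) + (-(fCf v) * (-1/4)) * ∏ j, (![fun t : ℝ => Real.exp (-(3/2) * t ^ 2 + (v 0) * t + (-(v 0)^2/2)), fun t : ℝ => t ^ 2 * Real.exp (-(9/4)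 * t ^ 2 + (v 1/2) * t + (-(v 1)^2/4)), fun t : ℝ => t * Real.exp (-(25/8) * t ^ 2 + (v 2/4) * t + (-(v 2)^2/8))] : Fin 3 → ℝ → ℝ) j (x j)) ((MeasurableEquiv.toLp 2 (Fin 3 → ℝ)).symm (v - w)) := by
    funext w
    simp only [hkern, dd, MeasurableEquiv.toLp_symm_apply,
      Fin.prod_univ_three, Matrix.cons_val_zero, Matrix.cons_val_one, Matrix.head_cons,
      Matrix.cons_val_two, Matrix.tail_cons, Fin.isValue]
    rw [exp_merge]
    norm_num
    ring
  rw [hcomp]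
  have hG : Integrable (fun x : Fin 3 → ℝ => (-(fCf v) * (-3/4)) * ∏ j, (![fun t : ℝ => t ^ 2 * Real.exp (-(3/2) * t ^ 2 + (v 0) * t + (-(v 0)^2/2)), fun t : ℝ => Real.exp (-(9/4) * t ^ 2 + (v 1/2) * t + (-(v 1)^2/4)), fun t : ℝ => t * Real.exp (-(25/8) * t ^ 2 + (v 2/4) * t + (-(v 2)^2/8))] : Fin 3 → ℝ → ℝ) j (x j) + (-(fCf v) * (-1/4)) * ∏ j, (![fun t : ℝ => Real.exp (-(3/2) * t ^ 2 + (v 0) * t + (-(v 0)^2/2)), fun t : ℝ => t ^ 2 * Real.exp (-(9/4) * t ^ 2 + (v 1/2) * t + (-(v 1)^2/4)), fun t : ℝ => t * Real.exp (-(25/8) * t ^ 2 + (v 2/4) * t + (-(v 2)^2/8))] : Fin 3 → ℝ → ℝ) j (x j)) := (hint1.const_mul _).add (hint2.const_mul _)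
  have hG2 : Integrable (fun z : E3 => (fun x : Fin 3 → ℝ => (-(fCf v) * (-3/4)) * ∏ j, (![fun t : ℝ => t ^ 2 * Real.exp (-(3/2) * t ^ 2 + (v 0) * t + (-(v 0)^2/2)), fun t : ℝ => Real.exp (-(9/4) * t ^ 2 + (v 1/2) * t + (-(v 1)^2/4)), fun t : ℝ => t * Real.exp (-(25/8) * t ^ 2 + (v 2/4) * t + (-(v 2)^2/8))] : Fin 3 → ℝ → ℝ) j (x j) + (-(fCf v) * (-1/4)) * ∏ j, (![fun t : ℝ => Real.exp (-(3/2) * t ^ 2 + (v 0) * t + (-(v 0)^2/2)), fun t : ℝ => t ^ 2 * Real.exp (-(9/4) * t ^ 2 + (v 1/2) * t + (-(v 1)^2/4)), fun t : ℝ => t * Real.exp (-(25/8) * t ^ 2 + (v 2/4) * t + (-(v 2)^2/8))] : Fin 3 → ℝ → ℝ) j (x j)) ((MeasurableEquiv.toLp 2 (Fin 3 → ℝ)).symm z)) :=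
    ((EuclideanSpace.volume_preserving_symm_measurableEquiv_toLp (Fin 3)).integrable_comp_emb
      (MeasurableEquiv.measurableEmbedding _)).mpr hG
  exact hG2.comp_sub_left v

lemma Qc_eq (v : E3) : landauQc Set.univ phiC fCf v
    = ∑ i, (∫ w : E3, hkern v i w) • EuclideanSpace.single i 1 := by
  have hint : ∀ i : Fin 3, Integrable fun w : E3 => hkern v i w := by
    intro i; fin_cases i
    exacts [hkern_int0 v, hkern_int1 v, hkern_int2 v]
  unfold landauQc
  rw [MeasureTheory.setIntegral_univ]
  calc (∫ w : E3, phiC (v - w) • ((‖v - w‖ ^ 2) • (fCf w • gradient fCf v - fCf v • gradient fCf w)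
          - (inner ℝ (v - w) (fCf w • gradient fCf v - fCf v • gradient fCf w) : ℝ) • (v - w)))
      = ∫ w : E3, ∑ i, hkern v i w • EuclideanSpace.single i 1 := by
        congr 1; funext w; exact integrand_decomp v w
    _ = ∑ i, ∫ w : E3, hkern v i w • EuclideanSpace.single i 1 :=
        integral_finset_sum _ (fun i _ => (hint i).smul_const _)
    _ = ∑ i, (∫ w : E3, hkern v i w) • EuclideanSpace.single i 1 := by
        refine Finset.sum_congr rfl fun i _ => integral_smul_const _ _

lemma pj_single (i j : Fin 3) : pj i (EuclideanSpace.single j (1:ℝ)) = if i = j then 1 else 0 := by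
  simp [pj, EuclideanSpace.single_apply]


/-- Test problem C in three dimensions: Ω = ℝ³, φ(v) = exp(−v₁² − 2v₂² − 3v₃²),
f(v) = exp(−v₁²/2 − v₂²/4 − v₃²/8); then
Q(f,f)(v) = ∇·Q^c(f,f)(v) = −(1/41006250) q₁(v) (q₃₁(v) + q₃₂(v)). -/
theorem landauQ_testC_3d :
    ∀ v : EuclideanSpace ℝ (Fin 3),
      landauDiv (landauQc Set.univ
          (fun w => Real.exp (-(w 0) ^ 2 - 2 * (w 1) ^ 2 - 3 * (w 2) ^ 2))
          (fun w => Real.exp (-(w 0) ^ 2 / 2 - (w 1) ^ 2 / 4 - (w 2) ^ 2 / 8))) v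
      = -(1 / 41006250) *
          (Real.sqrt 3 * Real.pi ^ ((3 : ℝ) / 2)
            * Real.exp (-(5 / 6) * (v 0) ^ 2 - 17 / 36 * (v 1) ^ 2
                - 49 / 200 * (v 2) ^ 2)) *
          ((17500 * (v 0) ^ 2 * (v 1) ^ 2 + 7047 * (v 0) ^ 2 * (v 2) ^ 2
              + 135 * (v 1) ^ 2 * (v 2) ^ 2)
            + (-1005300 * (v 0) ^ 2 + 111000 * (v 1) ^ 2 + 46899 * (v 2) ^ 2
                + 369900)) := by
  intro v
  show landauDiv (landauQc Set.univ phiC fCf) v = _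
  have hQ : ∀ u : E3, landauQc Set.univ phiC fCf u
      = (SS * gE u * ((-1/486) * (u 0 * (u 1 * u 1)) + (-1/2500) * (u 0 * (u 2 * u 2)) + (-52/675) * u 0)) • EuclideanSpace.single 0 1
        + (SS * gE u * ((1/162) * (u 0 * (u 0 * u 1)) + (-1/22500) * (u 1 * (u 2 * u 2)) + (19/1350) * u 1)) • EuclideanSpace.single 1 1
        + (SS * gE u * ((1/300) * (u 0 * (u 0 * u 2)) + (1/8100) * (u 1 * (u 1 * u 2)) + (11/900) * u 2)) • EuclideanSpace.single 2 1 := by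
    intro u
    rw [Qc_eq u, Fin.sum_univ_three, intQ0 u, intQ1 u, intQ2 u]

  have hc0 : (fun u : E3 => landauQc Set.univ phiC fCf u 0)
      = fun u : E3 => SS * gE u * ((-1/486) * (u 0 * (u 1 * u 1)) + (-1/2500) * (u 0 * (u 2 * u 2)) + (-52/675) * u 0) := by
    funext u
    rw [hQ u]
    simp only [PiLp.add_apply, PiLp.smul_apply, smul_eq_mul, EuclideanSpace.single_apply]
    norm_num [Fin.ext_iff]

  have hc1 : (fun u : E3 => landauQc Set.univ phiC fCf u 1)
      = fun u : E3 => SS * gE u * ((1/162) * (u 0 * (u 0 * u 1)) + (-1/22500) * (u 1 * (u 2 * u 2)) + (19/1350) * u 1) := by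
    funext u
    rw [hQ u]
    simp only [PiLp.add_apply, PiLp.smul_apply, smul_eq_mul, EuclideanSpace.single_apply]
    norm_num [Fin.ext_iff]

  have hc2 : (fun u : E3 => landauQc Set.univ phiC fCf u 2)
      = fun u : E3 => SS * gE u * ((1/300) * (u 0 * (u 0 * u 2)) + (1/8100) * (u 1 * (u 1 * u 2)) + (11/900) * u 2) := by
    funext u
    rw [hQ u]
    simp only [PiLp.add_apply, PiLp.smul_apply, smul_eq_mul, EuclideanSpace.single_apply]
    norm_num [Fin.ext_iff]
  have h0 : HasFDerivAt (fun u : E3 => u 0) (pj 0) v := (pj 0).hasFDerivAt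
  have h1 : HasFDerivAt (fun u : E3 => u 1) (pj 1) v := (pj 1).hasFDerivAt
  have h2 : HasFDerivAt (fun u : E3 => u 2) (pj 2) v := (pj 2).hasFDerivAt
  have hgE : HasFDerivAt gE (gE v • ((2*(-(5/6))*(v 0)) • pj 0 + (2*(-(17/36))*(v 1)) • pj 1
      + (2*(-(49/200))*(v 2)) • pj 2)) v := hasFDerivAt_exp_quad (-(5/6)) (-(17/36)) (-(49/200)) v
  have hD0 := (hgE.const_mul SS).mul ((((h0.mul (h1.mul h1)).const_mul ((-1:ℝ)/486)).add ((h0.mul (h2.mul h2)).const_mul ((-1:ℝ)/2500))).add (h0.const_mul ((-52:ℝ)/675)))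
  have hD1 := (hgE.const_mul SS).mul ((((h0.mul (h0.mul h1)).const_mul ((1:ℝ)/162)).add ((h1.mul (h2.mul h2)).const_mul ((-1:ℝ)/22500))).add (h1.const_mul ((19:ℝ)/1350)))
  have hD2 := (hgE.const_mul SS).mul ((((h0.mul (h0.mul h2)).const_mul ((1:ℝ)/300)).add ((h1.mul (h1.mul h2)).const_mul ((1:ℝ)/8100))).add (h2.const_mul ((11:ℝ)/900)))
  unfold landauDiv
  rw [Fin.sum_univ_three, hc0, hc1, hc2]
  erw [hD0.fderiv, hD1.fderiv, hD2.fderiv]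
  simp only [ContinuousLinearMap.add_apply, ContinuousLinearMap.coe_smul', Pi.smul_apply,
    ContinuousLinearMap.smul_apply, pj_single, smul_eq_mul]
  norm_num [Fin.ext_iff]
  have hge : gE v = Real.exp (-(5 / 6) * (v 0) ^ 2 - 17 / 36 * (v 1) ^ 2 - 49 / 200 * (v 2) ^ 2) := by
    simp only [gE]; congr 1; ring
  rw [SS_eq, hge]
  ring
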